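/- Let n, k be integers with 0 ≤ k ≤ n/2 and let I be the ideal of ℚ[x_1,...,x_n,t] described below. Then the quotient ℚ[x_1,...,x_n,t]/I, regarded as a module over the polynomial ring ℚ[t], is generated by at most C(n,k) elements; in particular its rank over ℚ[t] is at most the binomial coefficient C(n,k). -/

import Mathlib

open scoped BigOperators

/-- The variable `t` in `ℚ[x₁,…,xₙ,t] = MvPolynomial (Fin (n+1)) ℚ`
(variable `0` is `t`, variable `i` is `xᵢ` for `1 ≤ i ≤ n`). -/
noncomputable def tP (n : ℕ) : MvPolynomial (Fin (n + 1)) ℚ :=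
  MvPolynomial.X 0

/-- The variable `xᵢ` (for `1 ≤ i ≤ n`) of `ℚ[x₁,…,xₙ,t]`, with the
convention `x₀ = 0` (and `xᵢ = 0` out of range). -/
noncomputable def xP (n : ℕ) (i : ℕ) : MvPolynomial (Fin (n + 1)) ℚ :=
  if h : 1 ≤ i ∧ i ≤ n then MvPolynomial.X ⟨i, by omega⟩ else 0

/-- The ideal `I` of `ℚ[x₁,…,xₙ,t]` generated by
(i) `∑ᵢ xᵢ - (n(n+1)/2)·t`;
(ii) `(xᵢ + xᵢ₋₁ - (n-k+i)·t)·(xᵢ - xᵢ₋₁ - t)` for `1 ≤ i ≤ n`;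
(iii) `∏_{j=0}^{k} (x_{i_j} - (i_j - j)·t)` for all `1 ≤ i₀ < ⋯ < iₖ ≤ n`. -/
noncomputable def Iid (n k : ℕ) : Ideal (MvPolynomial (Fin (n + 1)) ℚ) :=
  Ideal.span
    ({(∑ i ∈ Finset.Icc 1 n, xP n i) -
        MvPolynomial.C (((n : ℚ) * ((n : ℚ) + 1)) / 2) * tP n} ∪
      {p | ∃ i, 1 ≤ i ∧ i ≤ n ∧
        p = (xP n i + xP n (i - 1) - MvPolynomial.C ((n : ℚ) - (k : ℚ) + (i : ℚ)) * tP n) *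
              (xP n i - xP n (i - 1) - tP n)} ∪
      {p | ∃ m : Fin (k + 1) → ℕ, StrictMono m ∧ 1 ≤ m 0 ∧ m (Fin.last k) ≤ n ∧
        p = ∏ j : Fin (k + 1),
              (xP n (m j) - MvPolynomial.C ((m j : ℚ) - ((j : ℕ) : ℚ)) * tP n)})


set_option maxHeartbeats 1000000
set_option synthInstance.maxHeartbeats 400000
open Finset MvPolynomial

section Comb
open Finset

variable {n : ℕ}

lemma sumA (g : Finset (Fin n) → Fin n → ℚ) :
    ∑ T : Finset (Fin n), ∑ i ∈ T, g (T.erase i) i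
      = ∑ S : Finset (Fin n), ∑ i ∈ Sᶜ, g S i := by
  rw [Finset.sum_sigma', Finset.sum_sigma']
  refine Finset.sum_bij' (fun a _ => ⟨a.1.erase a.2, a.2⟩) (fun a _ => ⟨insert a.2 a.1, a.2⟩)
    ?_ ?_ ?_ ?_ ?_
  · rintro ⟨T, i⟩ h
    simp only [Finset.mem_sigma, Finset.mem_univ, true_and] at h ⊢
    simp [Finset.mem_compl, h]
  · rintro ⟨S, i⟩ h
    simp only [Finset.mem_sigma, Finset.mem_univ, true_and, Finset.mem_compl] at h ⊢
    simp
  · rintro ⟨T, i⟩ h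
    simp only [Finset.mem_sigma, Finset.mem_univ, true_and] at h
    simp [Finset.insert_erase h]
  · rintro ⟨S, i⟩ h
    simp only [Finset.mem_sigma, Finset.mem_univ, true_and, Finset.mem_compl] at h
    simp [Finset.erase_insert h]
  · rintro ⟨T, i⟩ h
    rfl

lemma crossLemma (b : Finset (Fin n) → ℚ) :
    ∑ T : Finset (Fin n), ∑ i ∈ T, ∑ j ∈ T.erase i, b (T.erase i) * b (T.erase j)
      = ∑ S : Finset (Fin n), ∑ i ∈ Sᶜ, ∑ j ∈ (insert i S)ᶜ, b (insert i S) * b (insert j S) := by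
  have step1 : ∑ T : Finset (Fin n), ∑ i ∈ T, ∑ j ∈ T.erase i, b (T.erase i) * b (T.erase j)
      = ∑ T : Finset (Fin n), ∑ i ∈ T,
          (fun S i => ∑ j ∈ S, b S * b (insert i (S.erase j))) (T.erase i) i := by
    refine Finset.sum_congr rfl fun T _ => Finset.sum_congr rfl fun i hi =>
      Finset.sum_congr rfl fun j hj => ?_
    have hji : j ≠ i := (Finset.mem_erase.mp hj).1
    have hjT : j ∈ T := (Finset.mem_erase.mp hj).2
    congr 1
    rw [Finset.erase_right_comm, Finset.insert_erase (Finset.mem_erase.mpr ⟨hji.symm, hi⟩)]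
  rw [step1, sumA (fun S i => ∑ j ∈ S, b S * b (insert i (S.erase j)))]
  have step2 : ∀ S : Finset (Fin n), ∑ i ∈ Sᶜ, ∑ j ∈ S, b S * b (insert i (S.erase j))
      = ∑ j ∈ S, (fun C j => ∑ i ∈ (insert j C)ᶜ, b (insert j C) * b (insert i C)) (S.erase j) j := by
    intro S
    rw [Finset.sum_comm]
    refine Finset.sum_congr rfl fun j hj => ?_
    simp only
    rw [Finset.insert_erase hj]
  rw [Finset.sum_congr rfl fun S _ => step2 S, sumA (fun C j => ∑ i ∈ (insert j C)ᶜ, b (insert j C) * b (insert i C))]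

lemma keyIdentity (b : Finset (Fin n) → ℚ) :
    ∑ T : Finset (Fin n), (∑ i ∈ T, b (T.erase i))^2
      + ∑ T : Finset (Fin n), (T.card : ℚ) * (b T)^2
    = ∑ S : Finset (Fin n), (∑ i ∈ Sᶜ, b (insert i S))^2
      + ∑ S : Finset (Fin n), ((Sᶜ.card : ℚ)) * (b S)^2 := by
  have expand1 : ∀ T : Finset (Fin n), (∑ i ∈ T, b (T.erase i))^2
      = ∑ i ∈ T, ((b (T.erase i))^2 + ∑ j ∈ T.erase i, b (T.erase i) * b (T.erase j)) := by
    intro T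
    rw [sq, Finset.sum_mul_sum]
    refine Finset.sum_congr rfl fun i hi => ?_
    rw [← Finset.add_sum_erase _ _ hi, sq]
  have expand2 : ∀ S : Finset (Fin n), (∑ i ∈ Sᶜ, b (insert i S))^2
      = ∑ i ∈ Sᶜ, ((b (insert i S))^2 + ∑ j ∈ (insert i S)ᶜ, b (insert i S) * b (insert j S)) := by
    intro S
    rw [sq, Finset.sum_mul_sum]
    refine Finset.sum_congr rfl fun i hi => ?_
    rw [← Finset.add_sum_erase _ _ hi, sq, Finset.compl_insert]
  simp only [Finset.sum_congr rfl fun T _ => expand1 T,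
    Finset.sum_congr rfl fun S _ => expand2 S, Finset.sum_add_distrib]
  have diag1 : ∑ T : Finset (Fin n), ∑ i ∈ T, (b (T.erase i))^2
      = ∑ S : Finset (Fin n), ((Sᶜ.card : ℚ)) * (b S)^2 := by
    rw [sumA (fun S _ => (b S)^2)]
    exact Finset.sum_congr rfl fun S _ => by rw [Finset.sum_const, nsmul_eq_mul]
  have diag2 : ∑ S : Finset (Fin n), ∑ i ∈ Sᶜ, (b (insert i S))^2
      = ∑ T : Finset (Fin n), (T.card : ℚ) * (b T)^2 := by
    rw [← sumA (fun S i => (b (insert i S))^2)]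
    refine Finset.sum_congr rfl fun T _ => ?_
    rw [Finset.sum_congr rfl (fun i hi => by rw [Finset.insert_erase hi]), Finset.sum_const,
      nsmul_eq_mul]
  rw [diag1, diag2, crossLemma]
  ring

/-- If `U b = 0` and `b` is supported on small sets, then `b = 0`. -/
lemma keyInjectivity (b : Finset (Fin n) → ℚ)
    (h0 : ∀ T : Finset (Fin n), ∑ i ∈ T, b (T.erase i) = 0)
    (hs : ∀ S : Finset (Fin n), b S ≠ 0 → 2 * S.card < n) :
    ∀ S, b S = 0 := by
  have key := keyIdentity b
  simp only [h0] at key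
  -- key : ∑ 0^2 + ∑ card * b^2 = ∑ (D b)^2 + ∑ cardᶜ * b^2
  have hA : ∀ S : Finset (Fin n), (S.card : ℚ) * (b S)^2 + (b S)^2 ≤ ((Sᶜ.card : ℚ)) * (b S)^2 := by
    intro S
    rcases eq_or_ne (b S) 0 with h | h
    · simp [h]
    · have h1 : 2 * S.card < n := hs S h
      have h2 : S.card + Sᶜ.card = n := by
        rw [Finset.card_add_card_compl, Fintype.card_fin]
      have h3 : (S.card : ℚ) + 1 ≤ (Sᶜ.card : ℚ) := by
        have : S.card + 1 ≤ Sᶜ.card := by omega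
        exact_mod_cast this
      have h4 : (0:ℚ) < (b S)^2 := by positivity
      nlinarith
  have hsum : ∑ S : Finset (Fin n), ((S.card : ℚ) * (b S)^2 + (b S)^2)
      ≤ ∑ S : Finset (Fin n), ((Sᶜ.card : ℚ)) * (b S)^2 :=
    Finset.sum_le_sum fun S _ => hA S
  rw [Finset.sum_add_distrib] at hsum
  have hD : (0:ℚ) ≤ ∑ S : Finset (Fin n), (∑ i ∈ Sᶜ, b (insert i S))^2 :=
    Finset.sum_nonneg fun S _ => sq_nonneg _
  have hz : ∑ S : Finset (Fin n), (b S)^2 ≤ 0 := by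
    simp only [ne_eq, OfNat.ofNat_ne_zero, not_false_eq_true, zero_pow, Finset.sum_const, smul_zero, zero_add] at key
    linarith
  have hz2 : ∑ S : Finset (Fin n), (b S)^2 = 0 :=
    le_antisymm hz (Finset.sum_nonneg fun S _ => sq_nonneg _)
  intro S
  have := (Finset.sum_eq_zero_iff_of_nonneg (fun S _ => sq_nonneg (b S))).mp hz2 S
    (Finset.mem_univ S)
  exact pow_eq_zero_iff (by norm_num) |>.mp this

end Comb

namespace SpringerAux

/-- The square-free monomial indexed by a subset. -/
noncomputable def Mon (n : ℕ) (S : Finset (Fin n)) : MvPolynomial (Fin (n + 1)) ℚ :=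
  ∏ i ∈ S, MvPolynomial.X i.succ

/-- The ideal `J = I + (t)`. -/
noncomputable def Jid (n k : ℕ) : Ideal (MvPolynomial (Fin (n + 1)) ℚ) :=
  Iid n k ⊔ Ideal.span {tP n}

variable {n k : ℕ}

lemma xP_succ (i : Fin n) : xP n ((i : ℕ) + 1) = MvPolynomial.X i.succ := by
  have h : 1 ≤ (i:ℕ)+1 ∧ (i:ℕ)+1 ≤ n := ⟨Nat.succ_le_succ (Nat.zero_le _), i.2⟩
  rw [xP, dif_pos h]
  rfl

lemma xP_zero : xP n 0 = 0 := by rw [xP, dif_neg]; omega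

lemma tP_mem_J : tP n ∈ Jid n k :=
  Submodule.mem_sup_right (Ideal.subset_span rfl)

lemma Iid_le_J : Iid n k ≤ Jid n k := le_sup_left

lemma sum_mem_J : (∑ i : Fin n, MvPolynomial.X (R := ℚ) i.succ) ∈ Jid n k := by
  have h1 : (∑ i ∈ Finset.Icc 1 n, xP n i) -
      MvPolynomial.C (((n : ℚ) * ((n : ℚ) + 1)) / 2) * tP n ∈ Jid n k :=
    Iid_le_J (Ideal.subset_span (by left; left; rfl))
  have h2 : MvPolynomial.C (((n : ℚ) * ((n : ℚ) + 1)) / 2) * tP n ∈ Jid n k :=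
    Ideal.mul_mem_left _ _ tP_mem_J
  have h3 : (∑ i ∈ Finset.Icc 1 n, xP n i) ∈ Jid n k := by
    have := Submodule.add_mem _ h1 h2
    simpa using this
  have h4 : (∑ i ∈ Finset.Icc 1 n, xP n i) = ∑ i : Fin n, MvPolynomial.X (R := ℚ) i.succ := by
    rw [show (∑ i : Fin n, MvPolynomial.X (R := ℚ) i.succ) = ∑ i : Fin n, xP n ((i:ℕ)+1) from
      Finset.sum_congr rfl fun i _ => (xP_succ i).symm]
    refine (Finset.sum_bij (fun (j : Fin n) _ => (j : ℕ) + 1) ?_ ?_ ?_ ?_).symm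
    · intro j _; simp only [Finset.mem_Icc]; omega
    · intro a _ b _ hab; ext; omega
    · intro i hi
      simp only [Finset.mem_Icc] at hi
      exact ⟨⟨i - 1, by omega⟩, Finset.mem_univ _, by simp; omega⟩
    · intro j _; rfl
  rwa [h4] at h3

end SpringerAux

namespace SpringerAux
variable {n k : ℕ}

lemma xP_sq_mem_J : ∀ i : ℕ, i ≤ n → (xP n i)^2 ∈ Jid n k := by
  intro i
  induction i with
  | zero => intro _; rw [xP_zero]; simp
  | succ i ih =>
    intro hin
    have hii : i ≤ n := Nat.le_of_succ_le hin
    have hgen : (xP n (i+1) + xP n ((i+1) - 1) -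
        MvPolynomial.C ((n : ℚ) - (k : ℚ) + ((i+1 : ℕ) : ℚ)) * tP n) *
          (xP n (i+1) - xP n ((i+1) - 1) - tP n) ∈ Jid n k := by
      refine Iid_le_J (Ideal.subset_span ?_)
      left; right
      exact ⟨i+1, by omega, hin, rfl⟩
    have hsimp : (i+1) - 1 = i := rfl
    rw [hsimp] at hgen
    set c : ℚ := (n : ℚ) - (k : ℚ) + ((i+1 : ℕ) : ℚ) with hc
    have hident : (xP n (i+1))^2 =
        (xP n (i+1) + xP n i - MvPolynomial.C c * tP n) * (xP n (i+1) - xP n i - tP n)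
        + (xP n i)^2
        + tP n * (xP n (i+1) + xP n i + MvPolynomial.C c * xP n (i+1)
            - MvPolynomial.C c * xP n i - MvPolynomial.C c * tP n) := by
      ring
    rw [hident]
    exact Submodule.add_mem _ (Submodule.add_mem _ hgen (ih hii))
      (Ideal.mul_mem_right _ _ tP_mem_J)

lemma X_sq_mem_J (i : Fin n) : (MvPolynomial.X (R := ℚ) i.succ)^2 ∈ Jid n k := by
  rw [← xP_succ i]
  exact xP_sq_mem_J _ (by omega)

lemma Mon_mem_J (hk : 2 * k ≤ n) (S : Finset (Fin n)) (hS : S.card = k + 1) :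
    Mon n S ∈ Jid n k := by
  classical
  set f := S.orderEmbOfFin hS with hf
  set m : Fin (k+1) → ℕ := fun j => (f j : ℕ) + 1 with hm
  have hmono : StrictMono m := by
    intro a b hab
    have := (S.orderEmbOfFin hS).strictMono hab
    simp only [hm]
    have : (f a : ℕ) < (f b : ℕ) := this
    omega
  have h0 : 1 ≤ m 0 := by simp [hm]
  have hlast : m (Fin.last k) ≤ n := by
    have := (f (Fin.last k)).2
    simp only [hm]
    omega
  have hgen : (∏ j : Fin (k + 1),
      (xP n (m j) - MvPolynomial.C ((m j : ℚ) - ((j : ℕ) : ℚ)) * tP n)) ∈ Jid n k := by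
    refine Iid_le_J (Ideal.subset_span ?_)
    right
    exact ⟨m, hmono, h0, hlast, rfl⟩
  -- Mon n S - gen ∈ span {tP n}
  have hq : Mon n S - (∏ j : Fin (k + 1),
      (xP n (m j) - MvPolynomial.C ((m j : ℚ) - ((j : ℕ) : ℚ)) * tP n)) ∈
        Ideal.span {tP n} := by
    rw [← Ideal.Quotient.eq]
    have h1 : ∀ j : Fin (k+1), (Ideal.Quotient.mk (Ideal.span {tP n}))
        (xP n (m j) - MvPolynomial.C ((m j : ℚ) - ((j : ℕ) : ℚ)) * tP n)
        = Ideal.Quotient.mk (Ideal.span {tP n}) (MvPolynomial.X (f j).succ) := by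
      intro j
      have ht : (Ideal.Quotient.mk (Ideal.span {tP n})) (tP n) = 0 :=
        Ideal.Quotient.eq_zero_iff_mem.mpr (Ideal.subset_span rfl)
      rw [map_sub, map_mul, ht, mul_zero, sub_zero, hm]
      congr 1
      exact xP_succ (f j)
    rw [Mon, map_prod, map_prod, Finset.prod_congr rfl fun j _ => h1 j]
    refine (Finset.prod_bij (fun (j : Fin (k+1)) _ => f j) ?_ ?_ ?_ ?_).symm
    · intro j _; exact Finset.orderEmbOfFin_mem S hS j
    · intro a _ b _ hab; exact f.injective hab
    · intro i hi
      have : i ∈ Set.range f := by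
        rw [Finset.range_orderEmbOfFin S hS]; exact hi
      obtain ⟨j, hj⟩ := this
      exact ⟨j, Finset.mem_univ _, by simpa using hj⟩
    · intro j _; rfl
  have := Submodule.add_mem _ hgen (Submodule.mem_sup_right hq : _ ∈ Jid n k)
  simpa using this

lemma rho_mem_J (hk : 2 * k ≤ n) (S : Finset (Fin n)) :
    (∑ i ∈ Sᶜ, Mon n (insert i S)) ∈ Jid n k := by
  classical
  have hident : (∑ i : Fin n, MvPolynomial.X (R := ℚ) i.succ) * Mon n S
      = (∑ i ∈ Sᶜ, Mon n (insert i S))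
        + ∑ i ∈ S, (MvPolynomial.X (R := ℚ) i.succ)^2 * Mon n (S.erase i) := by
    rw [Finset.sum_mul]
    rw [← Finset.sum_compl_add_sum S (fun i => MvPolynomial.X (R := ℚ) i.succ * Mon n S)]
    congr 1
    · refine Finset.sum_congr rfl fun i hi => ?_
      rw [Mon, Mon, Finset.prod_insert (Finset.mem_compl.mp hi)]
    · refine Finset.sum_congr rfl fun i hi => ?_
      rw [Mon, Mon, ← Finset.mul_prod_erase _ _ hi]
      ring
  have h1 : (∑ i : Fin n, MvPolynomial.X (R := ℚ) i.succ) * Mon n S ∈ Jid n k :=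
    Ideal.mul_mem_right _ _ sum_mem_J
  have h2 : (∑ i ∈ S, (MvPolynomial.X (R := ℚ) i.succ)^2 * Mon n (S.erase i)) ∈ Jid n k :=
    Submodule.sum_mem _ fun i _ => Ideal.mul_mem_right _ _ (X_sq_mem_J i)
  have := Submodule.sub_mem _ h1 h2
  rw [hident] at this
  simpa using this

end SpringerAux

namespace SpringerAux
variable {n k : ℕ}

lemma Mon_eq_monomial (S : Finset (Fin n)) :
    Mon n S = monomial (∑ i ∈ S, Finsupp.single i.succ 1) (1:ℚ) := by
  rw [Mon, monomial_sum_one]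
  rfl

/-- images of the `Mon S`, `|S| ≤ k` span the quotient by `J` over `ℚ`. -/
lemma span_Mon_eq_top (hk : 2 * k ≤ n) :
    Submodule.span ℚ (Set.range (fun S : {S : Finset (Fin n) // S.card ≤ k} =>
      (Ideal.Quotient.mkₐ ℚ (Jid n k)) (Mon n S.1))) = ⊤ := by
  classical
  set q := Ideal.Quotient.mkₐ ℚ (Jid n k) with hq
  set N := Submodule.span ℚ (Set.range (fun S : {S : Finset (Fin n) // S.card ≤ k} =>
      q (Mon n S.1))) with hN
  have hmono : ∀ d : Fin (n+1) →₀ ℕ, q (monomial d 1) ∈ N := by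
    intro d
    by_cases hd0 : d 0 ≠ 0
    · have hdvd : (X 0 : MvPolynomial (Fin (n+1)) ℚ) ∣ monomial d 1 :=
        X_dvd_monomial.mpr (Or.inr hd0)
      obtain ⟨e, he⟩ := hdvd
      have : monomial d (1:ℚ) ∈ Jid n k := by
        rw [he]; exact Ideal.mul_mem_right _ _ tP_mem_J
      rw [show q (monomial d 1) = 0 from Ideal.Quotient.eq_zero_iff_mem.mpr this]
      exact Submodule.zero_mem _
    by_cases hd2 : ∃ i : Fin n, 2 ≤ d i.succ
    · obtain ⟨i, hi⟩ := hd2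
      have hdvd : (X i.succ : MvPolynomial (Fin (n+1)) ℚ)^2 ∣ monomial d 1 := by
        rw [X_pow_eq_monomial]
        refine monomial_one_dvd_monomial_one.mpr ?_
        intro v
        rcases eq_or_ne v i.succ with rfl | hv
        · rwa [Finsupp.single_eq_same]
        · rw [Finsupp.single_eq_of_ne' hv.symm]; exact Nat.zero_le _
      obtain ⟨e, he⟩ := hdvd
      have : monomial d (1:ℚ) ∈ Jid n k := by
        rw [he]; exact Ideal.mul_mem_right _ _ (X_sq_mem_J i)
      rw [show q (monomial d 1) = 0 from Ideal.Quotient.eq_zero_iff_mem.mpr this]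
      exact Submodule.zero_mem _
    · push_neg at hd0 hd2
      set S := Finset.univ.filter (fun i : Fin n => d i.succ = 1) with hS
      have hdS : d = ∑ i ∈ S, Finsupp.single i.succ 1 := by
        ext v
        rw [Finset.sum_apply']
        refine Fin.cases ?_ ?_ v
        · rw [hd0]
          symm
          refine Finset.sum_eq_zero fun i _ => ?_
          exact Finsupp.single_eq_of_ne' (Fin.succ_ne_zero i)
        · intro j
          have : ∀ i ∈ S, Finsupp.single i.succ 1 j.succ
              = if i = j then 1 else 0 := by
            intro i _
            rw [Finsupp.single_apply]
            simp [Fin.succ_inj]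
          rw [Finset.sum_congr rfl this, Finset.sum_ite_eq' S j]
          by_cases hj : j ∈ S
          · rw [if_pos hj]
            exact (Finset.mem_filter.mp hj).2
          · rw [if_neg hj]
            have := hd2 j
            have : d j.succ ≠ 1 := fun hc => hj (Finset.mem_filter.mpr ⟨Finset.mem_univ _, hc⟩)
            omega
      have hMon : monomial d (1:ℚ) = Mon n S := by rw [Mon_eq_monomial, hdS]
      by_cases hcard : S.card ≤ k
      · rw [hMon]
        exact Submodule.subset_span ⟨⟨S, hcard⟩, rfl⟩
      · obtain ⟨S', hS'sub, hS'card⟩ := Finset.exists_subset_card_eq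
          (show k + 1 ≤ S.card by omega)
        have : Mon n S ∈ Jid n k := by
          rw [Mon, ← Finset.prod_sdiff hS'sub]
          exact Ideal.mul_mem_left _ _ (Mon_mem_J hk S' hS'card)
        rw [hMon, show q (Mon n S) = 0 from Ideal.Quotient.eq_zero_iff_mem.mpr this]
        exact Submodule.zero_mem _
  rw [eq_top_iff]
  rintro x -
  obtain ⟨p, rfl⟩ := Ideal.Quotient.mkₐ_surjective ℚ _ x
  rw [show p = ∑ d ∈ p.support, monomial d (coeff d p) from (support_sum_monomial_coeff p).symm,
    map_sum]
  refine Submodule.sum_mem _ fun d _ => ?_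
  have : monomial d (coeff d p) = (coeff d p) • monomial d (1:ℚ) := by
    rw [smul_monomial, smul_eq_mul, mul_one]
  rw [this, map_smul]
  exact Submodule.smul_mem _ _ (hmono d)

end SpringerAux
-- appended to alg1 for testing
namespace SpringerAux
variable {n k : ℕ}

lemma card_le_subtype_eq : Fintype.card {S : Finset (Fin n) // S.card ≤ k}
    = Fintype.card {S : Finset (Fin n) // S.card < k} + n.choose k := by
  classical
  rw [Fintype.card_subtype, Fintype.card_subtype]
  have : (Finset.univ.filter fun S : Finset (Fin n) => S.card ≤ k)
      = (Finset.univ.filter fun S : Finset (Fin n) => S.card < k)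
        ∪ (Finset.univ.filter fun S : Finset (Fin n) => S.card = k) := by
    ext S
    simp only [Finset.mem_filter, Finset.mem_union, Finset.mem_univ, true_and]
    omega
  rw [this, Finset.card_union_of_disjoint]
  · congr 1
    have : (Finset.univ.filter fun S : Finset (Fin n) => S.card = k)
        = Finset.powersetCard k (Finset.univ : Finset (Fin n)) := by
      ext S
      simp [Finset.mem_powersetCard, Finset.subset_univ]
    rw [this, Finset.card_powersetCard, Finset.card_univ, Fintype.card_fin]
  · rw [Finset.disjoint_filter]
    intro S _ hlt
    omega

/-- The quotient by `J` has dimension at most `choose n k`. -/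
lemma finrank_QJ_le (hk : 2 * k ≤ n) :
    FiniteDimensional ℚ (MvPolynomial (Fin (n+1)) ℚ ⧸ Jid n k) ∧
    Module.finrank ℚ (MvPolynomial (Fin (n+1)) ℚ ⧸ Jid n k) ≤ n.choose k := by
  classical
  set Q := MvPolynomial (Fin (n+1)) ℚ ⧸ Jid n k
  set v : {S : Finset (Fin n) // S.card ≤ k} → Q :=
    fun S => (Ideal.Quotient.mkₐ ℚ (Jid n k)) (Mon n S.1) with hv
  set φ : ({S : Finset (Fin n) // S.card ≤ k} → ℚ) →ₗ[ℚ] Q :=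
    Fintype.linearCombination ℚ v with hφ
  have hrange : LinearMap.range φ = ⊤ := by
    rw [hφ, Fintype.range_linearCombination, span_Mon_eq_top hk]
  have hsurj : Function.Surjective φ := LinearMap.range_eq_top.mp hrange
  have hfd : FiniteDimensional ℚ Q := Module.Finite.of_surjective φ hsurj
  refine ⟨hfd, ?_⟩
  -- the relations
  have hins : ∀ (S : {S : Finset (Fin n) // S.card < k}) (i : Fin n), i ∈ (S.1)ᶜ →
      (insert i S.1).card ≤ k := by
    intro S i hi
    rw [Finset.card_insert_of_notMem (Finset.mem_compl.mp hi)]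
    have := S.2
    omega
  set ρ : {S : Finset (Fin n) // S.card < k} → ({S : Finset (Fin n) // S.card ≤ k} → ℚ) :=
    fun S => ∑ i ∈ (S.1)ᶜ.attach,
        Pi.single (⟨insert i.1 S.1, hins S i.1 i.2⟩ : {S : Finset (Fin n) // S.card ≤ k}) (1:ℚ)
    with hρ
  have hρker : ∀ S, φ (ρ S) = 0 := by
    intro S
    rw [hρ]
    simp only [map_sum]
    have h1 : ∀ (i : {x // x ∈ (S.1)ᶜ}),
        φ (Pi.single (⟨insert i.1 S.1, hins S i.1 i.2⟩ : {S : Finset (Fin n) // S.card ≤ k})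
          (1:ℚ)) = v ⟨insert i.1 S.1, hins S i.1 i.2⟩ := by
      intro i
      rw [hφ, Fintype.linearCombination_apply_single, one_smul]
    rw [Finset.sum_congr rfl fun i _ => h1 i]
    have h2 : ∑ i ∈ (S.1)ᶜ.attach, v ⟨insert i.1 S.1, hins S i.1 i.2⟩
        = (Ideal.Quotient.mkₐ ℚ (Jid n k)) (∑ i ∈ (S.1)ᶜ, Mon n (insert i S.1)) := by
      rw [map_sum, ← Finset.sum_attach ((S.1)ᶜ) (fun i => (Ideal.Quotient.mkₐ ℚ (Jid n k))
        (Mon n (insert i S.1)))]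
    rw [h2]
    exact Ideal.Quotient.eq_zero_iff_mem.mpr (rho_mem_J hk S.1)
  have hρindep : LinearIndependent ℚ ρ := by
    rw [Fintype.linearIndependent_iff]
    intro g hg
    set abar : Finset (Fin n) → ℚ := fun S => if h : S.card < k then g ⟨S, h⟩ else 0 with habar
    have evalT : ∀ (T : Finset (Fin n)), T.card ≤ k →
        ∑ i ∈ T, abar (T.erase i) = 0 := by
      intro T hT
      have := congrFun hg ⟨T, hT⟩
      rw [Finset.sum_apply] at this
      have h3 : ∀ S : {S : Finset (Fin n) // S.card < k},
          (g S • ρ S) ⟨T, hT⟩ = ∑ i ∈ (S.1)ᶜ, abar S.1 * (if T = insert i S.1 then 1 else 0) := by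
        intro S
        rw [Pi.smul_apply, hρ]
        simp only [Finset.sum_apply]
        rw [Finset.smul_sum]
        rw [← Finset.sum_attach ((S.1)ᶜ) (fun i => abar S.1 * (if T = insert i S.1 then 1 else 0))]
        refine Finset.sum_congr rfl fun i _ => ?_
        rw [Pi.single_apply, smul_eq_mul]
        have habarS : abar S.1 = g S := by
          rw [habar]; simp only [S.2, dif_pos]
        rw [habarS]
        simp only [Subtype.mk.injEq]
      rw [Finset.sum_congr rfl fun S _ => h3 S] at this
      -- convert subtype sum to full sum
      have h4 : ∑ S : {S : Finset (Fin n) // S.card < k},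
            ∑ i ∈ (S.1)ᶜ, abar S.1 * (if T = insert i S.1 then 1 else 0)
          = ∑ S : Finset (Fin n), ∑ i ∈ Sᶜ, abar S * (if T = insert i S then 1 else 0) := by
        rw [← Finset.sum_subtype (Finset.univ.filter (fun S : Finset (Fin n) => S.card < k))
          (by intro x; simp) (fun S => ∑ i ∈ Sᶜ, abar S * (if T = insert i S then 1 else 0))]
        refine Finset.sum_subset (Finset.subset_univ _) ?_
        intro S _ hS
        simp only [Finset.mem_filter, Finset.mem_univ, true_and, not_lt] at hS
        have : abar S = 0 := dif_neg (by omega)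
        simp [this]
      rw [h4] at this
      rw [← sumA (fun S i => abar S * (if T = insert i S then 1 else 0))] at this
      have h5 : ∀ T' : Finset (Fin n), ∀ i ∈ T',
          abar (T'.erase i) * (if T = insert i (T'.erase i) then 1 else 0)
          = abar (T'.erase i) * (if T = T' then 1 else 0) := by
        intro T' i hi
        rw [Finset.insert_erase hi]
      rw [Finset.sum_congr rfl fun T' _ => Finset.sum_congr rfl fun i hi => h5 T' i hi] at this
      rw [Finset.sum_eq_single T (fun T' _ hne => Finset.sum_eq_zero fun i _ => by
          rw [if_neg (Ne.symm hne), mul_zero])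
        (fun hT' => absurd (Finset.mem_univ T) hT')] at this
      simpa using this
    -- per-level argument
    have hlevel : ∀ j : ℕ, j < k → ∀ S : Finset (Fin n), S.card = j → abar S = 0 := by
      intro j hj
      set b : Finset (Fin n) → ℚ := fun S => if S.card = j then abar S else 0 with hb
      have hU : ∀ T : Finset (Fin n), ∑ i ∈ T, b (T.erase i) = 0 := by
        intro T
        by_cases hT : T.card = j + 1
        · have hTk : T.card ≤ k := by omega
          have : ∀ i ∈ T, b (T.erase i) = abar (T.erase i) := by
            intro i hi
            rw [hb]
            simp [Finset.card_erase_of_mem hi, hT]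
          rw [Finset.sum_congr rfl this]
          exact evalT T hTk
        · refine Finset.sum_eq_zero fun i hi => ?_
          rw [hb]
          simp only [Finset.card_erase_of_mem hi]
          rw [if_neg (by have := Finset.card_pos.mpr ⟨i, hi⟩; omega)]
      have hz := keyInjectivity b hU (fun S hS => by
        rw [hb] at hS
        by_cases hcard : S.card = j
        · omega
        · simp only [if_neg hcard] at hS; exact absurd rfl hS)
      intro S hSj
      have := hz S
      rw [hb] at this
      simpa [hSj] using this
    intro S
    have : abar S.1 = g S := by rw [habar]; simp only [S.2, dif_pos]
    rw [← this]
    exact hlevel S.1.card S.2 S.1 rfl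
  -- dimension count
  have hspan_le_ker : Submodule.span ℚ (Set.range ρ) ≤ LinearMap.ker φ := by
    rw [Submodule.span_le]
    rintro x ⟨S, rfl⟩
    exact LinearMap.mem_ker.mpr (hρker S)
  have hker_ge : Fintype.card {S : Finset (Fin n) // S.card < k}
      ≤ Module.finrank ℚ (LinearMap.ker φ) := by
    have h1 : Module.finrank ℚ (Submodule.span ℚ (Set.range ρ))
        = Fintype.card {S : Finset (Fin n) // S.card < k} := finrank_span_eq_card hρindep
    rw [← h1]
    exact Submodule.finrank_mono hspan_le_ker
  have hrn := LinearMap.finrank_range_add_finrank_ker φ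
  rw [hrange, finrank_top] at hrn
  have hdom : Module.finrank ℚ ({S : Finset (Fin n) // S.card ≤ k} → ℚ)
      = Fintype.card {S : Finset (Fin n) // S.card ≤ k} := Module.finrank_pi ℚ
  rw [hdom] at hrn
  have hcards := card_le_subtype_eq (n := n) (k := k)
  have hQeq : Module.finrank ℚ Q = Module.finrank ℚ (MvPolynomial (Fin (n+1)) ℚ ⧸ Jid n k) := rfl
  omega

end SpringerAux
namespace SpringerAux

attribute [local instance] MvPolynomial.gradedAlgebra

variable {n k : ℕ}

noncomputable abbrev HS (n : ℕ) := MvPolynomial.homogeneousSubmodule (Fin (n+1)) ℚ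

lemma xP_mem_hs (i : ℕ) : xP n i ∈ HS n 1 := by
  rw [xP]
  split
  · rw [mem_homogeneousSubmodule]
    exact isHomogeneous_X _ _
  · exact Submodule.zero_mem _

lemma tP_mem_hs : tP n ∈ HS n 1 := by
  rw [tP, mem_homogeneousSubmodule]
  exact isHomogeneous_X _ _

lemma Mon_isHomog (S : Finset (Fin n)) : (Mon n S).IsHomogeneous S.card := by
  rw [Mon]
  have := MvPolynomial.IsHomogeneous.prod S (fun i => (X i.succ : MvPolynomial (Fin (n+1)) ℚ))
    (fun _ => 1) (fun i _ => isHomogeneous_X _ _)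
  simpa using this

lemma Iid_isHomogeneous : (Iid n k).IsHomogeneous (HS n) := by
  apply Ideal.homogeneous_span (HS n)
  rintro x hx
  rcases hx with (hx | hx) | hx
  · rcases hx with rfl
    refine ⟨1, ?_⟩
    refine Submodule.sub_mem _ (Submodule.sum_mem _ fun i _ => xP_mem_hs i) ?_
    have : (MvPolynomial.C (((n : ℚ) * ((n : ℚ) + 1)) / 2) * tP n).IsHomogeneous (0 + 1) :=
      (isHomogeneous_C _ _).mul (mem_homogeneousSubmodule _ _ |>.mp tP_mem_hs)
    rw [mem_homogeneousSubmodule]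
    simpa using this
  · obtain ⟨i, hi1, hin, rfl⟩ := hx
    refine ⟨2, ?_⟩
    rw [mem_homogeneousSubmodule]
    have h1 : (xP n i + xP n (i-1) - MvPolynomial.C ((n : ℚ) - (k : ℚ) + (i : ℚ)) * tP n)
        ∈ HS n 1 := by
      refine Submodule.sub_mem _ (Submodule.add_mem _ (xP_mem_hs i) (xP_mem_hs (i-1))) ?_
      rw [mem_homogeneousSubmodule]
      have : (MvPolynomial.C ((n : ℚ) - (k : ℚ) + (i : ℚ)) * tP n).IsHomogeneous (0 + 1) :=
        (isHomogeneous_C _ _).mul (mem_homogeneousSubmodule _ _ |>.mp tP_mem_hs)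
      simpa using this
    have h2 : (xP n i - xP n (i-1) - tP n) ∈ HS n 1 :=
      Submodule.sub_mem _ (Submodule.sub_mem _ (xP_mem_hs i) (xP_mem_hs (i-1))) tP_mem_hs
    have := (mem_homogeneousSubmodule _ _ |>.mp h1).mul
      (mem_homogeneousSubmodule _ _ |>.mp h2)
    simpa using this
  · obtain ⟨m, hmono, h0, hlast, rfl⟩ := hx
    refine ⟨k + 1, ?_⟩
    rw [mem_homogeneousSubmodule]
    have hfac : ∀ j : Fin (k+1),
        (xP n (m j) - MvPolynomial.C ((m j : ℚ) - ((j : ℕ) : ℚ)) * tP n).IsHomogeneous 1 := by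
      intro j
      have : (MvPolynomial.C ((m j : ℚ) - ((j : ℕ) : ℚ)) * tP n).IsHomogeneous (0 + 1) :=
        (isHomogeneous_C _ _).mul (mem_homogeneousSubmodule _ _ |>.mp tP_mem_hs)
      refine mem_homogeneousSubmodule _ _ |>.mp
        (Submodule.sub_mem _ (xP_mem_hs (m j)) ?_)
      rw [mem_homogeneousSubmodule]
      simpa using this
    have := MvPolynomial.IsHomogeneous.prod Finset.univ
      (fun j : Fin (k+1) => xP n (m j) - MvPolynomial.C ((m j : ℚ) - ((j : ℕ) : ℚ)) * tP n)
      (fun _ => 1) (fun j _ => hfac j)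
    simpa using this

lemma decompose_coe (p : MvPolynomial (Fin (n+1)) ℚ) (d : ℕ) :
    (DirectSum.decompose (HS n) p d : MvPolynomial (Fin (n+1)) ℚ)
      = homogeneousComponent d p :=
  MvPolynomial.decomposition.decompose'_apply p d

end SpringerAux
namespace SpringerAux

attribute [local instance] MvPolynomial.gradedAlgebra

variable {n k : ℕ}

lemma comp_mul_tP (r : MvPolynomial (Fin (n+1)) ℚ) (d : ℕ) :
    homogeneousComponent (d+1) (r * tP n) = homogeneousComponent d r * tP n := by
  rw [← decompose_coe, ← decompose_coe]
  exact DirectSum.coe_decompose_mul_add_of_right_mem (HS n) tP_mem_hs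

lemma comp0_mul_tP (r : MvPolynomial (Fin (n+1)) ℚ) :
    homogeneousComponent 0 (r * tP n) = 0 := by
  rw [← decompose_coe]
  exact DirectSum.coe_decompose_mul_of_right_mem_of_not_le (HS n) tP_mem_hs (by omega)

end SpringerAux


open SpringerAux in
/-- The quotient `ℚ[x₁,…,xₙ,t]/I` is generated by at most `C(n,k)` elements as
a `ℚ[t]`-module (the module structure induced by `t ↦ t̄`); in particular its
rank over `ℚ[t]` is at most `C(n,k)`. -/
theorem quotient_Iid_generated_by_choose (n k : ℕ) (h : 2 * k ≤ n) :
    letI : Module (Polynomial ℚ) (MvPolynomial (Fin (n + 1)) ℚ ⧸ Iid n k) :=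
      Module.compHom _
        (Polynomial.aeval (Ideal.Quotient.mk (Iid n k) (tP n))).toRingHom
    (∃ G : Finset (MvPolynomial (Fin (n + 1)) ℚ ⧸ Iid n k),
        G.card ≤ n.choose k ∧
          Submodule.span (Polynomial ℚ)
            (G : Set (MvPolynomial (Fin (n + 1)) ℚ ⧸ Iid n k)) = ⊤) ∧
      Module.rank (Polynomial ℚ) (MvPolynomial (Fin (n + 1)) ℚ ⧸ Iid n k) ≤
        (n.choose k : Cardinal) := by
  classical
  letI : Module (Polynomial ℚ) (MvPolynomial (Fin (n + 1)) ℚ ⧸ Iid n k) :=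
    Module.compHom _
      (Polynomial.aeval (Ideal.Quotient.mk (Iid n k) (tP n))).toRingHom
  obtain ⟨hfd, hfr⟩ := finrank_QJ_le (n := n) (k := k) h
  set mkQ := Ideal.Quotient.mkₐ ℚ (Jid n k) with hmkQ
  set vQ : {S : Finset (Fin n) // S.card ≤ k} → (MvPolynomial (Fin (n+1)) ℚ ⧸ Jid n k) :=
    fun S => mkQ (Mon n S.1) with hvQ
  have hspanQ : Submodule.span ℚ (Set.range vQ) = ⊤ := span_Mon_eq_top h
  obtain ⟨bset, hsub, hspaneq, hli⟩ := exists_linearIndependent ℚ (Set.range vQ)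
  rw [hspanQ] at hspaneq
  have hbfin : bset.Finite := Set.Finite.subset (Set.finite_range vQ) hsub
  haveI : Fintype ↥bset := hbfin.fintype
  have hcard1 : bset.toFinset.card ≤ n.choose k := by
    have h1 : Module.finrank ℚ (Submodule.span ℚ bset) = bset.toFinset.card :=
      finrank_span_set_eq_card hli
    rw [hspaneq, finrank_top] at h1
    omega
  set F : (MvPolynomial (Fin (n+1)) ℚ ⧸ Jid n k) → Finset (Fin n) := fun x =>
    if hx : ∃ S : {S : Finset (Fin n) // S.card ≤ k}, vQ S = x then (Classical.choose hx).1
    else ∅ with hF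
  have hF1 : ∀ x ∈ bset, (F x).card ≤ k ∧ mkQ (Mon n (F x)) = x := by
    intro x hx
    have hex : ∃ S : {S : Finset (Fin n) // S.card ≤ k}, vQ S = x := hsub hx
    rw [hF]
    simp only [dif_pos hex]
    exact ⟨(Classical.choose hex).2, Classical.choose_spec hex⟩
  set G : Finset (MvPolynomial (Fin (n + 1)) ℚ ⧸ Iid n k) :=
    bset.toFinset.image (fun x => Ideal.Quotient.mk (Iid n k) (Mon n (F x))) with hG
  have hGcard : G.card ≤ n.choose k := le_trans (Finset.card_image_le) hcard1
  set N := Submodule.span (Polynomial ℚ)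
    (G : Set (MvPolynomial (Fin (n + 1)) ℚ ⧸ Iid n k)) with hN
  have hsmul : ∀ (c : Polynomial ℚ) (a : MvPolynomial (Fin (n + 1)) ℚ ⧸ Iid n k),
      c • a = (Polynomial.aeval (Ideal.Quotient.mk (Iid n k) (tP n)) c) * a :=
    fun _ _ => rfl
  have hsmulX : ∀ a : MvPolynomial (Fin (n + 1)) ℚ ⧸ Iid n k,
      (Polynomial.X : Polynomial ℚ) • a = Ideal.Quotient.mk (Iid n k) (tP n) * a := by
    intro a; rw [hsmul, Polynomial.aeval_X]
  have hsmulC : ∀ (c : ℚ) (a : MvPolynomial (Fin (n + 1)) ℚ ⧸ Iid n k),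
      (Polynomial.C c) • a = Ideal.Quotient.mk (Iid n k) (MvPolynomial.C c) * a := by
    intro c a
    rw [hsmul, Polynomial.aeval_C]
    congr 1
  have main : ∀ d, ∀ p : MvPolynomial (Fin (n+1)) ℚ, p.IsHomogeneous d →
      Ideal.Quotient.mk (Iid n k) p ∈ N := by
    intro d
    induction d using Nat.strong_induction_on with
    | _ d ih =>
    intro p hp
    have h1 : mkQ p ∈ Submodule.span ℚ (↑bset.toFinset : Set _) := by
      rw [Set.coe_toFinset, hspaneq]; trivial
    obtain ⟨f, -, hf⟩ := Submodule.mem_span_finset.mp h1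
    have hu : p - ∑ x ∈ bset.toFinset, MvPolynomial.C (f x) * Mon n (F x) ∈ Jid n k := by
      have h2 : mkQ (p - ∑ x ∈ bset.toFinset, MvPolynomial.C (f x) * Mon n (F x)) = 0 := by
        rw [map_sub, map_sum]
        have h3 : ∀ x ∈ bset.toFinset,
            mkQ (MvPolynomial.C (f x) * Mon n (F x)) = f x • x := by
          intro x hx
          rw [← MvPolynomial.smul_eq_C_mul, map_smul,
            (hF1 x (Set.mem_toFinset.mp hx)).2]
        rw [Finset.sum_congr rfl h3, hf, sub_self]
      have h2' : Ideal.Quotient.mk (Jid n k)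
          (p - ∑ x ∈ bset.toFinset, MvPolynomial.C (f x) * Mon n (F x)) = 0 := h2
      exact Ideal.Quotient.eq_zero_iff_mem.mp h2'
    obtain ⟨a, ha, z, hz, hazu⟩ := Submodule.mem_sup.mp hu
    obtain ⟨r, hr⟩ := Ideal.mem_span_singleton'.mp hz
    have heq : p = (∑ x ∈ bset.toFinset, MvPolynomial.C (f x) * Mon n (F x)) + a + r * tP n := by
      rw [hr]; linear_combination -hazu
    have hcomp := congrArg (homogeneousComponent d) heq
    rw [homogeneousComponent_of_mem (mem_homogeneousSubmodule _ _ |>.mpr hp), if_pos rfl,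
      map_add, map_add, map_sum] at hcomp
    have hMonC : ∀ x ∈ bset.toFinset, homogeneousComponent d (MvPolynomial.C (f x) * Mon n (F x))
        = MvPolynomial.C (f x) * (if d = (F x).card then Mon n (F x) else 0) := by
      intro x _
      rw [homogeneousComponent_C_mul,
        homogeneousComponent_of_mem (mem_homogeneousSubmodule _ _ |>.mpr (Mon_isHomog (F x)))]
    rw [Finset.sum_congr rfl hMonC] at hcomp
    have hamem : homogeneousComponent d a ∈ Iid n k := by
      have := Iid_isHomogeneous (n := n) (k := k) d ha
      rwa [decompose_coe] at this
    -- now apply mk to hcomp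
    have hmk := congrArg (Ideal.Quotient.mk (Iid n k)) hcomp
    rw [map_add, map_add, map_sum, Ideal.Quotient.eq_zero_iff_mem.mpr hamem, add_zero] at hmk
    have hterm : ∀ x ∈ bset.toFinset,
        Ideal.Quotient.mk (Iid n k)
          (MvPolynomial.C (f x) * (if d = (F x).card then Mon n (F x) else 0)) ∈ N := by
      intro x hx
      by_cases hd : d = (F x).card
      · rw [if_pos hd, map_mul, ← hsmulC]
        refine Submodule.smul_mem _ _ (Submodule.subset_span ?_)
        exact Finset.mem_coe.mpr (Finset.mem_image_of_mem _ hx)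
      · rw [if_neg hd, mul_zero, map_zero]
        exact Submodule.zero_mem _
    have hsummem : (∑ x ∈ bset.toFinset, Ideal.Quotient.mk (Iid n k)
        (MvPolynomial.C (f x) * (if d = (F x).card then Mon n (F x) else 0))) ∈ N :=
      Submodule.sum_mem _ hterm
    rw [hmk]
    refine Submodule.add_mem _ hsummem ?_
    rcases d with _ | d'
    · rw [comp0_mul_tP, map_zero]
      exact Submodule.zero_mem _
    · rw [comp_mul_tP, map_mul, mul_comm, ← hsmulX]
      exact Submodule.smul_mem _ _
        (ih d' (by omega) _ (homogeneousComponent_isHomogeneous d' r))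
  have hNtop : N = ⊤ := by
    rw [eq_top_iff]
    rintro x -
    obtain ⟨p, rfl⟩ := Ideal.Quotient.mk_surjective x
    rw [show p = ∑ i ∈ Finset.range (p.totalDegree + 1), homogeneousComponent i p from
      (sum_homogeneousComponent p).symm, map_sum]
    exact Submodule.sum_mem _ fun i _ => main i _ (homogeneousComponent_isHomogeneous i p)
  refine ⟨⟨G, hGcard, hNtop⟩, ?_⟩
  have hr1 : Module.rank (Polynomial ℚ) (MvPolynomial (Fin (n + 1)) ℚ ⧸ Iid n k)
      = Module.rank (Polynomial ℚ) ↥N := by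
    rw [hNtop]
    exact (rank_top _ _).symm
  rw [hr1, hN]
  refine le_trans (rank_span_le _) ?_
  refine le_trans (le_of_eq (Cardinal.mk_coe_finset (s := G))) ?_
  exact_mod_cast hGcard
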